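/- Let L, c, f_co > 0 and θ ∈ (0, π/2), and define F̂(f) = f^{-2}·(L − (L³π²f²/(6c²))·(1 − f_co²/(2f²) − cos θ)²) for f > 0. Then f₁⁽¹⁾ = f_co² / √(12c²/(L²π²) + 2(1 − cos θ)·f_co²) is the unique f > 0 at which the derivative of F̂ vanishes. -/

import Mathlib

open Real

/-- The normalized signal-strength function
`F̂(f) = f⁻²·(L − (L³π²f²/(6c²))·(1 − f_co²/(2f²) − cos θ)²)`. -/
noncomputable def Fhat (L c f_co θ : ℝ) (f : ℝ) : ℝ :=
  (L - (L ^ 3 * π ^ 2 * f ^ 2 / (6 * c ^ 2)) *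
      (1 - f_co ^ 2 / (2 * f ^ 2) - Real.cos θ) ^ 2) / f ^ 2

/-- The critical point `f₁⁽¹⁾ = f_co² / √(12c²/(L²π²) + 2(1 − cos θ)·f_co²)`. -/
noncomputable def fOne (L c f_co θ : ℝ) : ℝ :=
  f_co ^ 2 / Real.sqrt (12 * c ^ 2 / (L ^ 2 * π ^ 2) + 2 * (1 - Real.cos θ) * f_co ^ 2)

/-- `f₁⁽¹⁾` is the unique positive `f` at which the derivative of `F̂` vanishes. -/
theorem fOne_unique_critical_point (L c f_co θ : ℝ) (hL : 0 < L) (hc : 0 < c)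
    (hfco : 0 < f_co) (hθ : θ ∈ Set.Ioo 0 (π / 2)) :
    0 < fOne L c f_co θ ∧
      ∀ f : ℝ, 0 < f → (deriv (Fhat L c f_co θ) f = 0 ↔ f = fOne L c f_co θ) := by
  have hπ : 0 < π := Real.pi_pos
  set k : ℝ := 1 - Real.cos θ with hk
  have hk0 : 0 ≤ k := by
    have := Real.cos_le_one θ; simp [hk]; linarith
  set A : ℝ := L ^ 3 * π ^ 2 / (6 * c ^ 2) with hA
  have hA0 : 0 < A := by positivity
  set C1 : ℝ := L + A * k * f_co ^ 2 with hC1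
  set C2 : ℝ := A * f_co ^ 4 / 4 with hC2
  have hC1pos : 0 < C1 := by positivity
  have hC2pos : 0 < C2 := by positivity
  -- denominator inside fOne
  set D : ℝ := 12 * c ^ 2 / (L ^ 2 * π ^ 2) + 2 * k * f_co ^ 2 with hD
  have hDpos : 0 < D := by positivity
  have hfOne : fOne L c f_co θ = Real.sqrt (2 * C2 / C1) := by
    have h1 : 2 * C2 / C1 = f_co ^ 4 / D := by
      rw [hC2, hC1, hD, hA]
      field_simp
      ring
    rw [fOne, h1, Real.sqrt_div (by positivity)]
    congr 1
    rw [show f_co ^ 4 = (f_co ^ 2) ^ 2 by ring, Real.sqrt_sq (by positivity)]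
  have hfOnePos : 0 < fOne L c f_co θ := by
    rw [hfOne]; exact Real.sqrt_pos.mpr (by positivity)
  refine ⟨hfOnePos, fun f hf => ?_⟩
  have hfne : f ≠ 0 := ne_of_gt hf
  -- Fhat agrees with a simpler function near f
  have heqn : ∀ x : ℝ, x ≠ 0 →
      Fhat L c f_co θ x = C1 / x ^ 2 - C2 / x ^ 4 - A * k ^ 2 := by
    intro x hx
    rw [Fhat, hC1, hC2, hA, hk]
    have hc' : (c : ℝ) ≠ 0 := ne_of_gt hc
    field_simp
    ring
  have hderiv : HasDerivAt (Fhat L c f_co θ)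
      (-2 * C1 / f ^ 3 + 4 * C2 / f ^ 5) f := by
    have h2 : HasDerivAt (fun x : ℝ => x ^ 2) (2 * f ^ 1) f := hasDerivAt_pow 2 f
    have h4 : HasDerivAt (fun x : ℝ => x ^ 4) (4 * f ^ 3) f := hasDerivAt_pow 4 f
    have hg : HasDerivAt (fun x : ℝ => C1 / x ^ 2 - C2 / x ^ 4 - A * k ^ 2)
        (-2 * C1 / f ^ 3 + 4 * C2 / f ^ 5) f := by
      have ha := ((hasDerivAt_const f C1).div h2 (pow_ne_zero 2 hfne)).sub
        ((hasDerivAt_const f C2).div h4 (pow_ne_zero 4 hfne))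
      have := ha.sub_const (A * k ^ 2)
      refine this.congr_deriv ?_
      field_simp
      ring
    refine hg.congr_of_eventuallyEq ?_
    filter_upwards [isOpen_ne.mem_nhds hfne] with x hx
    exact heqn x hx
  rw [hderiv.deriv, hfOne]
  constructor
  · intro h0
    have hsq : f ^ 2 = 2 * C2 / C1 := by
      field_simp at h0 ⊢
      nlinarith [pow_pos hf 3, pow_pos hf 5]
    rw [← hsq, Real.sqrt_sq hf.le]
  · intro hfe
    have hsq : f ^ 2 = 2 * C2 / C1 := by
      rw [hfe, Real.sq_sqrt (by positivity)]
    have hkey : f ^ 2 * C1 = 2 * C2 := by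
      rw [hsq]; field_simp
    have : -2 * C1 / f ^ 3 + 4 * C2 / f ^ 5 =
        (-2 * (f ^ 2 * C1) + 4 * C2) / f ^ 5 := by
      field_simp
    rw [this, hkey, div_eq_zero_iff]
    left
    ring
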